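/- Let Z ∈ ℝ^{a×b} and (A,B) any factorization of a best rank-r approximation of Z, i.e., AB = LR_r(Z). Then σ_r(A)·σ_r(B) ≤ σ_r(Z), with equality when AᵀA = BBᵀ. -/

import Mathlib

open Matrix

open Matrix

theorem Matrix.isHermitian_transpose_mul_self {m n : ℕ} (M : Matrix (Fin m) (Fin n) ℝ) :
    (Mᵀ * M).IsHermitian := by
  simpa using Matrix.isHermitian_conjTranspose_mul_self M

/-- The `i`-th largest singular value (0-indexed) of a real matrix `M`: the square root of
the `i`-th largest eigenvalue of `MᴴM`. -/
noncomputable def sv {m n : ℕ} (M : Matrix (Fin m) (Fin n) ℝ) (i : Fin n) : ℝ :=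
  Real.sqrt
    (((Matrix.isHermitian_transpose_mul_self M).eigenvalues ∘
      ⇑(Tuple.sort (Matrix.isHermitian_transpose_mul_self M).eigenvalues)) i.rev)


section helperlemmas
open Finset


section helpers
variable {n : ℕ}

lemma quad_zero {c d : ℝ} (hd : 0 ≤ d) (h : ∀ t : ℝ, 0 ≤ t ^ 2 * d - 2 * t * c) : c = 0 := by
  by_contra hc
  have h1 := h (c / (d + 1))
  have hd1 : (0:ℝ) < d + 1 := by linarith
  have hc2 : 0 < c ^ 2 := by positivity
  have hkey : (c / (d + 1)) ^ 2 * d - 2 * (c / (d + 1)) * c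
      = (c ^ 2 * d - 2 * c ^ 2 * (d + 1)) / (d + 1) ^ 2 := by
    field_simp
  rw [hkey, le_div_iff₀ (by positivity)] at h1
  nlinarith

lemma sum_dotProduct' {ι : Type*} (s : Finset ι) (f : ι → (Fin n → ℝ)) (w : Fin n → ℝ) :
    (∑ k ∈ s, f k) ⬝ᵥ w = ∑ k ∈ s, f k ⬝ᵥ w := by
  simp only [dotProduct, Finset.sum_apply, Finset.sum_mul]
  exact Finset.sum_comm

lemma dotProduct_sum' {ι : Type*} (s : Finset ι) (w : Fin n → ℝ) (f : ι → (Fin n → ℝ)) :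
    w ⬝ᵥ (∑ k ∈ s, f k) = ∑ k ∈ s, w ⬝ᵥ f k := by
  simp only [dotProduct, Finset.sum_apply, Finset.mul_sum]
  exact Finset.sum_comm

/-- expansion of dot products of combinations of an orthonormal family -/
lemma dot_combo {ι : Type*} [Fintype ι] [DecidableEq ι] (v : ι → (Fin n → ℝ))
    (hv : ∀ k l, v k ⬝ᵥ v l = if k = l then 1 else 0) (c d : ι → ℝ) :
    (∑ k, c k • v k) ⬝ᵥ (∑ l, d l • v l) = ∑ k, c k * d k := by
  rw [sum_dotProduct']
  refine Finset.sum_congr rfl fun k _ => ?_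
  rw [dotProduct_sum']
  rw [Finset.sum_eq_single k]
  · rw [smul_dotProduct, dotProduct_smul, hv k k, if_pos rfl]
    simp [mul_comm]
  · intro l _ hkl
    rw [smul_dotProduct, dotProduct_smul, hv k l, if_neg (Ne.symm hkl)]
    simp
  · simp

lemma mulVec_combo {ι : Type*} [Fintype ι] [DecidableEq ι] {M : Matrix (Fin n) (Fin n) ℝ}
    (v : ι → (Fin n → ℝ)) (lam : ι → ℝ) (hv : ∀ k, M *ᵥ v k = lam k • v k) (c : ι → ℝ) :
    M *ᵥ (∑ k, c k • v k) = ∑ k, (lam k * c k) • v k := by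
  have : ∀ (s : Finset ι), M *ᵥ (∑ k ∈ s, c k • v k) = ∑ k ∈ s, (lam k * c k) • v k := by
    intro s
    induction s using Finset.induction with
    | empty => simp [mulVec_zero]
    | insert _ _ hx ih =>
        rw [Finset.sum_insert hx, Finset.sum_insert hx, mulVec_add, mulVec_smul, hv, ih,
          smul_smul, mul_comm]
  exact this _

lemma dot_self_mulVec {m : ℕ} (X : Matrix (Fin m) (Fin n) ℝ) (v : Fin n → ℝ) :
    (X *ᵥ v) ⬝ᵥ (X *ᵥ v) = v ⬝ᵥ ((Xᵀ * X) *ᵥ v) := by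
  rw [← mulVec_mulVec, dotProduct_mulVec v, vecMul_transpose]

lemma dot_self_nonneg (v : Fin n → ℝ) : 0 ≤ v ⬝ᵥ v :=
  Finset.sum_nonneg fun i _ => mul_self_nonneg _

lemma eq_zero_of_dot_self (v : Fin n → ℝ) (h : v ⬝ᵥ v = 0) : v = 0 := by
  funext i
  have := (Finset.sum_eq_zero_iff_of_nonneg (fun i _ => mul_self_nonneg (v i))).1 h i (by simp)
  simpa [mul_self_eq_zero] using this

end helpers


variable {n : ℕ} {M : Matrix (Fin n) (Fin n) ℝ}

/-- plain-vector version of eigenvector basis -/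
noncomputable def evec (hM : M.IsHermitian) (k : Fin n) : Fin n → ℝ := ⇑(hM.eigenvectorBasis k)

lemma evec_ortho (hM : M.IsHermitian) (k l : Fin n) :
    evec hM k ⬝ᵥ evec hM l = if k = l then 1 else 0 := by
  have h := hM.eigenvectorBasis.orthonormal
  rcases eq_or_ne k l with rfl | hkl
  · have := h.1 k
    rw [@norm_eq_sqrt_real_inner] at this
    have h2 : (inner ℝ (hM.eigenvectorBasis k) (hM.eigenvectorBasis k) : ℝ) = 1 := by
      nlinarith [Real.sq_sqrt (real_inner_self_nonneg (x := hM.eigenvectorBasis k)),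
        real_inner_self_nonneg (x := hM.eigenvectorBasis k)]
    rw [if_pos rfl, ← h2, PiLp.inner_apply]
    simp [evec, dotProduct, mul_comm, sq]
  · have := h.2 hkl
    rw [if_neg hkl, ← this, PiLp.inner_apply]
    simp [evec, dotProduct, mul_comm]

lemma evec_eigen (hM : M.IsHermitian) (k : Fin n) :
    M *ᵥ evec hM k = hM.eigenvalues k • evec hM k := hM.mulVec_eigenvectorBasis k

lemma evec_repr (hM : M.IsHermitian) (x : Fin n → ℝ) :
    x = ∑ k, (evec hM k ⬝ᵥ x) • evec hM k := by
  have h := hM.eigenvectorBasis.sum_repr' (WithLp.toLp 2 x)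
  have : ∀ k, (inner ℝ (hM.eigenvectorBasis k) (WithLp.toLp 2 x) : ℝ)
      = evec hM k ⬝ᵥ x := by
    intro k
    rw [PiLp.inner_apply]
    simp [evec, dotProduct, mul_comm]
  calc x = WithLp.ofLp (∑ k, (inner ℝ (hM.eigenvectorBasis k) (WithLp.toLp 2 x) : ℝ)
        • hM.eigenvectorBasis k : EuclideanSpace ℝ (Fin n)) := by rw [h]
    _ = ∑ k, (evec hM k ⬝ᵥ x) • evec hM k := by
        simp_rw [this]
        simp [evec]


variable {n : ℕ} {M : Matrix (Fin n) (Fin n) ℝ}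

/-- sorted (ascending) eigenvalues -/
noncomputable def sorted (hM : M.IsHermitian) (k : Fin n) : ℝ :=
  hM.eigenvalues (Tuple.sort hM.eigenvalues k)

lemma sorted_mono (hM : M.IsHermitian) {j k : Fin n} (h : j ≤ k) :
    sorted hM j ≤ sorted hM k := Tuple.monotone_sort hM.eigenvalues h

lemma eig_eq_sorted (hM : M.IsHermitian) (k : Fin n) :
    hM.eigenvalues k = sorted hM ((Tuple.sort hM.eigenvalues).symm k) := by
  rw [sorted, Equiv.apply_symm_apply]

lemma sorted_zero_le_eig (hM : M.IsHermitian) (hn : 0 < n) (k : Fin n) :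
    sorted hM ⟨0, hn⟩ ≤ hM.eigenvalues k := by
  rw [eig_eq_sorted hM k]
  exact sorted_mono hM (by simp [Fin.le_def])

lemma sum_sorted (hM : M.IsHermitian) : ∑ k, sorted hM k = ∑ k, hM.eigenvalues k :=
  Equiv.sum_comp (Tuple.sort hM.eigenvalues) hM.eigenvalues

lemma rayleigh_min (hM : M.IsHermitian) (hn : 0 < n) (x : Fin n → ℝ) :
    sorted hM ⟨0, hn⟩ * (x ⬝ᵥ x) ≤ x ⬝ᵥ (M *ᵥ x) := by
  set c : Fin n → ℝ := fun k => evec hM k ⬝ᵥ x with hc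
  have hx := evec_repr hM x
  have hMx : M *ᵥ x = ∑ k, (hM.eigenvalues k * c k) • evec hM k := by
    conv_lhs => rw [hx]
    exact mulVec_combo _ _ (evec_eigen hM) c
  have h1 : x ⬝ᵥ (M *ᵥ x) = ∑ k, c k * (hM.eigenvalues k * c k) := by
    rw [hMx]; conv_lhs => rw [hx]
    exact dot_combo _ (evec_ortho hM) _ _
  have h2 : x ⬝ᵥ x = ∑ k, c k * c k := by
    conv_lhs => rw [hx]
    exact dot_combo _ (evec_ortho hM) _ _
  rw [h1, h2, Finset.mul_sum]
  refine Finset.sum_le_sum fun k _ => ?_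
  have := sorted_zero_le_eig hM hn k
  nlinarith [mul_self_nonneg (c k)]

lemma rank_ge_of_sorted_pos (hM : M.IsHermitian) {K : ℕ} (hK : K < n)
    (h : 0 < sorted hM ⟨K, hK⟩) : n - K ≤ M.rank := by
  rw [hM.rank_eq_card_non_zero_eigs]
  have hinj : Function.Injective (fun j : Fin (n - K) =>
      (⟨Tuple.sort hM.eigenvalues ⟨K + j.val, by omega⟩, by
        have : sorted hM ⟨K, hK⟩ ≤ sorted hM ⟨K + j.val, by omega⟩ :=
          sorted_mono hM (by simp [Fin.le_def])
        exact ne_of_gt (lt_of_lt_of_le h this)⟩ :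
        {i // hM.eigenvalues i ≠ 0})) := by
    intro j1 j2 hj
    simp only [Subtype.mk.injEq] at hj
    have := (Tuple.sort hM.eigenvalues).injective hj
    simpa [Fin.ext_iff] using this
  simpa using Fintype.card_le_of_injective _ hinj


variable {n : ℕ} {M : Matrix (Fin n) (Fin n) ℝ}

/-- linear map sending coefficients to a linear combination -/
noncomputable def combo {ι : Type*} [Fintype ι] (v : ι → (Fin n → ℝ)) :
    (ι → ℝ) →ₗ[ℝ] (Fin n → ℝ) where
  toFun c := ∑ k, c k • v k
  map_add' c d := by simp [add_smul, Finset.sum_add_distrib]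
  map_smul' t c := by simp [smul_smul, Finset.smul_sum]

lemma combo_inj {ι : Type*} [Fintype ι] [DecidableEq ι] (v : ι → (Fin n → ℝ))
    (hv : ∀ k l, v k ⬝ᵥ v l = if k = l then 1 else 0) :
    Function.Injective (combo v) := by
  rw [injective_iff_map_eq_zero]
  intro c hc
  have h0 : (∑ k, c k • v k) = 0 := hc
  have : (0:ℝ) = ∑ k, c k * c k := by
    conv_lhs => rw [show (0:ℝ) = (0 : Fin n → ℝ) ⬝ᵥ (0 : Fin n → ℝ) by simp]
    conv_lhs => rw [← h0]
    exact dot_combo v hv c c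
  funext k
  have := (Finset.sum_eq_zero_iff_of_nonneg (fun k _ => mul_self_nonneg (c k))).1 this.symm
    k (by simp)
  simpa [mul_self_eq_zero] using this

/-- Courant-Fischer, hard direction: a lower bound on the Rayleigh quotient valid on a
subspace of dimension `≥ n - K` bounds the `K`-th (ascending, 0-indexed) eigenvalue below. -/
lemma cf_lower (hM : M.IsHermitian) {K : ℕ} (hK : K < n) (α : ℝ)
    (U : Submodule ℝ (Fin n → ℝ)) (hdim : n - K ≤ Module.finrank ℝ U)
    (hU : ∀ x ∈ U, α * (x ⬝ᵥ x) ≤ x ⬝ᵥ (M *ᵥ x)) :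
    α ≤ sorted hM ⟨K, hK⟩ := by
  set g := Tuple.sort hM.eigenvalues with hg
  set wv : Fin (K + 1) → (Fin n → ℝ) := fun k => evec hM (g ⟨k.val, by omega⟩) with hwv
  have hortho : ∀ k l, wv k ⬝ᵥ wv l = if k = l then 1 else 0 := by
    intro k l
    rw [hwv]
    simp only
    rw [evec_ortho hM]
    congr 1
    simp only [eq_iff_iff]
    constructor
    · intro h
      have := g.injective h
      exact Fin.ext (by simpa [Fin.ext_iff] using this)
    · rintro rfl; rfl
  set W := LinearMap.range (combo wv) with hW
  have hWrank : Module.finrank ℝ W = K + 1 := by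
    rw [hW, LinearMap.finrank_range_of_inj (combo_inj wv hortho)]
    simp
  have hsum := Submodule.finrank_sup_add_finrank_inf_eq U W
  have hle : Module.finrank ℝ ↥(U ⊔ W) ≤ n := by
    have := Submodule.finrank_le (U ⊔ W)
    simpa using this
  have hpos : 0 < Module.finrank ℝ ↥(U ⊓ W) := by omega
  obtain ⟨⟨x, hxUW⟩, hxne⟩ := Module.finrank_pos_iff_exists_ne_zero.1 hpos
  have hxU : x ∈ U := hxUW.1
  obtain ⟨c, hc⟩ := hxUW.2
  have hxne' : x ≠ 0 := fun h => hxne (by simpa using h)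
  have hcx : x = ∑ k, c k • wv k := hc.symm
  have hcne : c ≠ 0 := by
    rintro rfl
    exact hxne' (by simp [hcx])
  -- dot products
  have hdot : x ⬝ᵥ x = ∑ k, c k * c k := by
    conv_lhs => rw [hcx]
    exact dot_combo wv hortho c c
  have hMx : M *ᵥ x = ∑ k, (hM.eigenvalues (g ⟨k.val, by omega⟩) * c k) • wv k := by
    conv_lhs => rw [hcx]
    exact mulVec_combo wv _ (fun k => evec_eigen hM _) c
  have hray : x ⬝ᵥ (M *ᵥ x) = ∑ k, c k * (hM.eigenvalues (g ⟨k.val, by omega⟩) * c k) := by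
    rw [hMx]; conv_lhs => rw [hcx]
    exact dot_combo wv hortho _ _
  have hub : x ⬝ᵥ (M *ᵥ x) ≤ sorted hM ⟨K, hK⟩ * (x ⬝ᵥ x) := by
    rw [hray, hdot, Finset.mul_sum]
    refine Finset.sum_le_sum fun k _ => ?_
    have hle2 : hM.eigenvalues (g ⟨k.val, by omega⟩) ≤ sorted hM ⟨K, hK⟩ := by
      have : sorted hM ⟨k.val, by omega⟩ ≤ sorted hM ⟨K, hK⟩ :=
        sorted_mono hM (by simp [Fin.le_def]; omega)
      exact this
    nlinarith [mul_self_nonneg (c k)]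
  have hSpos : 0 < x ⬝ᵥ x := by
    rw [hdot]
    obtain ⟨k, hk⟩ : ∃ k, c k ≠ 0 := by
      by_contra h
      push_neg at h
      exact hcne (funext h)
    exact Finset.sum_pos' (fun k _ => mul_self_nonneg _)
      ⟨k, by simp, mul_self_pos.mpr hk⟩
  have := (hU x hxU).trans hub
  exact le_of_mul_le_mul_right (by linarith) hSpos


variable {a b r n : ℕ}

lemma ip_shift (X : Matrix (Fin a) (Fin b) ℝ) (E : Matrix (Fin a) (Fin r) ℝ)
    (B : Matrix (Fin r) (Fin b) ℝ) :
    ∑ i, ∑ j, X i j * (E * B) i j = ∑ i, ∑ k, (X * Bᵀ) i k * E i k := by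
  refine Finset.sum_congr rfl fun i _ => ?_
  simp only [mul_apply, transpose_apply, Finset.mul_sum, Finset.sum_mul]
  rw [Finset.sum_comm]
  refine Finset.sum_congr rfl fun k _ => Finset.sum_congr rfl fun j _ => by ring

lemma frob_sub_expand (X Y : Matrix (Fin a) (Fin b) ℝ) (t : ℝ) :
    ∑ i, ∑ j, (X i j - t * Y i j) ^ 2
      = (∑ i, ∑ j, (X i j) ^ 2) - 2 * t * (∑ i, ∑ j, X i j * Y i j)
        + t ^ 2 * (∑ i, ∑ j, (Y i j) ^ 2) := by
  simp only [Finset.mul_sum, ← Finset.sum_sub_distrib, ← Finset.sum_add_distrib]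
  exact Finset.sum_congr rfl fun i _ => Finset.sum_congr rfl fun j _ => by ring

lemma frob_nonneg (Y : Matrix (Fin a) (Fin b) ℝ) : 0 ≤ ∑ i, ∑ j, (Y i j) ^ 2 :=
  Finset.sum_nonneg fun i _ => Finset.sum_nonneg fun j _ => sq_nonneg _

lemma eq_zero_of_frob_eq_zero {Y : Matrix (Fin a) (Fin b) ℝ}
    (h : ∑ i, ∑ j, (Y i j) ^ 2 = 0) : Y = 0 := by
  ext i j
  have h1 := (Finset.sum_eq_zero_iff_of_nonneg
    (fun i _ => Finset.sum_nonneg fun j _ => sq_nonneg (Y i j))).1 h i (by simp)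
  have h2 := (Finset.sum_eq_zero_iff_of_nonneg (fun j _ => sq_nonneg (Y i j))).1 h1 j (by simp)
  simpa [pow_eq_zero_iff] using h2

lemma frob_eq_trace (X : Matrix (Fin a) (Fin b) ℝ) :
    ∑ i, ∑ j, (X i j) ^ 2 = (Xᵀ * X).trace := by
  rw [trace]
  simp only [diag_apply, mul_apply, transpose_apply, sq]
  exact Finset.sum_comm

lemma ip_eq_trace (X Y : Matrix (Fin a) (Fin b) ℝ) :
    ∑ i, ∑ j, X i j * Y i j = (Xᵀ * Y).trace := by
  rw [trace]
  simp only [diag_apply, mul_apply, transpose_apply]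
  exact Finset.sum_comm

/-- first-order optimality: the residual is orthogonal to perturbations of `A`. -/
lemma stationarity {Z : Matrix (Fin a) (Fin b) ℝ} {A : Matrix (Fin a) (Fin r) ℝ}
    {B : Matrix (Fin r) (Fin b) ℝ}
    (hbest : ∀ C : Matrix (Fin a) (Fin b) ℝ, C.rank ≤ r →
      ∑ i, ∑ j, (Z i j - (A * B) i j) ^ 2 ≤ ∑ i, ∑ j, (Z i j - C i j) ^ 2) :
    (Z - A * B) * Bᵀ = 0 := by
  set X := Z - A * B with hX
  set E := X * Bᵀ with hE
  have key : ∀ t : ℝ, 0 ≤ t ^ 2 * (∑ i, ∑ j, ((E * B) i j) ^ 2)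
      - 2 * t * (∑ i, ∑ j, X i j * (E * B) i j) := by
    intro t
    have hrank : (A * B + t • (E * B)).rank ≤ r := by
      have : A * B + t • (E * B) = (A + t • E) * B := by
        rw [Matrix.add_mul, Matrix.smul_mul]
      rw [this]
      exact (Matrix.rank_mul_le_left _ _).trans
        ((Matrix.rank_le_card_width _).trans (by simp))
    have h1 := hbest _ hrank
    have h2 : ∀ i j, Z i j - (A * B + t • (E * B)) i j = X i j - t * (E * B) i j := by
      intro i j; simp [hX]; ring
    simp only [h2] at h1
    rw [frob_sub_expand] at h1
    have h3 : ∀ i j, Z i j - (A * B) i j = X i j := by intro i j; simp [hX]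
    simp only [h3] at h1
    linarith
  have hc := quad_zero (frob_nonneg (E * B)) key
  rw [ip_shift] at hc
  rw [← hE] at hc
  apply eq_zero_of_frob_eq_zero (Y := E)
  calc ∑ i, ∑ k, (E i k) ^ 2 = ∑ i, ∑ k, E i k * E i k := by simp [sq]
    _ = 0 := hc


variable {n : ℕ} {M : Matrix (Fin n) (Fin n) ℝ}

lemma star_unitary_mul_self (hM : M.IsHermitian) :
    (star (hM.eigenvectorUnitary : Matrix (Fin n) (Fin n) ℝ))
      * (hM.eigenvectorUnitary : Matrix (Fin n) (Fin n) ℝ) = 1 := by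
  have := hM.eigenvectorUnitary.2
  rw [Matrix.mem_unitaryGroup_iff'] at this
  exact this

lemma trace_eq_sum_eig (hM : M.IsHermitian) : M.trace = ∑ k, hM.eigenvalues k := by
  conv_lhs => rw [hM.spectral_theorem, Unitary.conjStarAlgAut_apply]
  rw [Matrix.trace_mul_comm, ← mul_assoc, star_unitary_mul_self hM, one_mul]
  simp [Matrix.trace_diagonal]

lemma trace_sq_eq_sum_eig_sq (hM : M.IsHermitian) :
    (M * M).trace = ∑ k, (hM.eigenvalues k) ^ 2 := by
  set U : Matrix (Fin n) (Fin n) ℝ := (hM.eigenvectorUnitary : Matrix (Fin n) (Fin n) ℝ)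
  set D : Matrix (Fin n) (Fin n) ℝ := diagonal (RCLike.ofReal ∘ hM.eigenvalues)
  have h : M = U * D * star U := hM.spectral_theorem
  have hMM : M * M = U * (D * D) * star U := by
    rw [h]
    simp only [mul_assoc]
    rw [← mul_assoc (star U) U, star_unitary_mul_self hM, one_mul]
  rw [hMM, Matrix.trace_mul_comm, ← mul_assoc, star_unitary_mul_self hM, one_mul]
  simp [D, diagonal_mul_diagonal, Matrix.trace_diagonal, sq]


variable {m n : ℕ}

lemma sorted_tm_nonneg (X : Matrix (Fin m) (Fin n) ℝ) (k : Fin n) :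
    0 ≤ sorted (isHermitian_transpose_mul_self X) k :=
  (posSemidef_conjTranspose_mul_self X).eigenvalues_nonneg _

lemma eig_tm_nonneg (X : Matrix (Fin m) (Fin n) ℝ) (k : Fin n) :
    0 ≤ (isHermitian_transpose_mul_self X).eigenvalues k :=
  (posSemidef_conjTranspose_mul_self X).eigenvalues_nonneg _

lemma dot_self_mulVecH (X : Matrix (Fin m) (Fin n) ℝ) (v : Fin n → ℝ) :
    (X *ᵥ v) ⬝ᵥ (X *ᵥ v) = v ⬝ᵥ ((Xᴴ * X) *ᵥ v) := by
  rw [conjTranspose_eq_transpose_of_trivial]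
  exact dot_self_mulVec X v

/-- every nonzero eigenvalue of `XᴴX` sits, in the ascending order, at a position `≥ K`,
provided `rank X ≤ n - K`. Hence the Rayleigh quotient on the range of `Xᵀ` is at least
the `K`-th ascending eigenvalue. -/
lemma rayleigh_on_range (X : Matrix (Fin m) (Fin n) ℝ) {K : ℕ} (hK : K < n)
    (hrank : X.rank ≤ n - K) (y : Fin m → ℝ) :
    sorted (isHermitian_transpose_mul_self X) ⟨K, hK⟩ * ((Xᵀ *ᵥ y) ⬝ᵥ (Xᵀ *ᵥ y))
      ≤ (Xᵀ *ᵥ y) ⬝ᵥ ((Xᴴ * X) *ᵥ (Xᵀ *ᵥ y)) := by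
  set hM := isHermitian_transpose_mul_self X with hhM
  set x : Fin n → ℝ := Xᵀ *ᵥ y with hx
  set c : Fin n → ℝ := fun k => evec hM k ⬝ᵥ x with hc
  -- coefficients vanish on kernel eigenvectors
  have hzero : ∀ k, hM.eigenvalues k = 0 → c k = 0 := by
    intro k hk
    have hXv : X *ᵥ evec hM k = 0 := by
      apply eq_zero_of_dot_self
      rw [dot_self_mulVec X (evec hM k), evec_eigen hM k, hk]
      simp
    have : c k = (X *ᵥ evec hM k) ⬝ᵥ y := by
      rw [hc]
      simp only [hx]
      rw [dotProduct_mulVec, vecMul_transpose]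
    rw [this, hXv]
    simp
  -- nonzero eigenvalues are at positions ≥ K
  have hbig : ∀ k, hM.eigenvalues k ≠ 0 →
      sorted hM ⟨K, hK⟩ ≤ hM.eigenvalues k := by
    intro k hk
    have hpos : 0 < hM.eigenvalues k := lt_of_le_of_ne (eig_tm_nonneg X k) (Ne.symm hk)
    rw [eig_eq_sorted hM k] at hpos ⊢
    set p := (Tuple.sort hM.eigenvalues).symm k with hp
    by_cases hpK : K ≤ p.val
    · exact sorted_mono hM (by simpa [Fin.le_def] using hpK)
    · exfalso
      push_neg at hpK
      have h1 : n - p.val ≤ (Xᴴ * X).rank := rank_ge_of_sorted_pos hM p.2 (by simpa using hpos)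
      have h2 : (Xᴴ * X).rank = X.rank := by
        rw [conjTranspose_eq_transpose_of_trivial]
        exact rank_transpose_mul_self X
      omega
  -- expand
  have hxr := evec_repr hM x
  have hMx : (Xᴴ * X) *ᵥ x = ∑ k, (hM.eigenvalues k * c k) • evec hM k := by
    conv_lhs => rw [hxr]
    exact mulVec_combo _ _ (evec_eigen hM) c
  have h1 : x ⬝ᵥ ((Xᴴ * X) *ᵥ x) = ∑ k, c k * (hM.eigenvalues k * c k) := by
    rw [hMx]; conv_lhs => rw [hxr]
    exact dot_combo _ (evec_ortho hM) _ _
  have h2 : x ⬝ᵥ x = ∑ k, c k * c k := by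
    conv_lhs => rw [hxr]
    exact dot_combo _ (evec_ortho hM) _ _
  rw [h1, h2, Finset.mul_sum]
  refine Finset.sum_le_sum fun k _ => ?_
  by_cases hk : hM.eigenvalues k = 0
  · rw [hzero k hk]; simp
  · have := hbig k hk
    nlinarith [mul_self_nonneg (c k), sorted_tm_nonneg X (⟨K, hK⟩ : Fin n)]


lemma combo_apply {n : ℕ} {ι : Type*} [Fintype ι] (v : ι → (Fin n → ℝ)) (c : ι → ℝ) :
    combo v c = ∑ k, c k • v k := rfl

lemma part1 {a b r : ℕ} (hr : 0 < r) (hrb : r ≤ b)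
    (Z : Matrix (Fin a) (Fin b) ℝ) (A : Matrix (Fin a) (Fin r) ℝ) (B : Matrix (Fin r) (Fin b) ℝ)
    (hZB : Z * Bᵀ = A * B * Bᵀ) :
    sorted (isHermitian_transpose_mul_self A) ⟨0, hr⟩ *
      sorted (isHermitian_transpose_mul_self B) ⟨b - r, by omega⟩
    ≤ sorted (isHermitian_transpose_mul_self Z) ⟨b - r, by omega⟩ := by
  have hbr : b - r < b := by omega
  set hAA := isHermitian_transpose_mul_self A with hhAA
  set hBB := isHermitian_transpose_mul_self B with hhBB
  set hZZ := isHermitian_transpose_mul_self Z with hhZZ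
  set μ0A := sorted hAA ⟨0, hr⟩ with hμ0A'
  set μBB := sorted hBB ⟨b - r, hbr⟩ with hμBB'
  have hμ0A : 0 ≤ μ0A := sorted_tm_nonneg A _
  have hμBB : 0 ≤ μBB := sorted_tm_nonneg B _
  by_cases hcase : μBB ≤ 0
  · have h0 : μBB = 0 := le_antisymm hcase hμBB
    rw [h0, mul_zero]
    exact sorted_tm_nonneg Z _
  · push_neg at hcase
    have hrkB : r ≤ B.rank := by
      have h1 : b - (b - r) ≤ (Bᴴ * B).rank := rank_ge_of_sorted_pos hBB hbr hcase
      have h2 : (Bᴴ * B).rank = B.rank := by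
        rw [conjTranspose_eq_transpose_of_trivial]
        exact rank_transpose_mul_self B
      omega
    apply cf_lower hZZ hbr _ (LinearMap.range (Bᵀ.mulVecLin))
    · have h3 : Module.finrank ℝ (LinearMap.range (Bᵀ.mulVecLin)) = Bᵀ.rank := rfl
      rw [h3, Matrix.rank_transpose]
      omega
    · rintro x ⟨y, rfl⟩
      simp only [mulVecLin_apply]
      set x := Bᵀ *ᵥ y with hx
      have e2 : x ⬝ᵥ ((Zᵀ * Z) *ᵥ x) = (Z *ᵥ x) ⬝ᵥ (Z *ᵥ x) := (dot_self_mulVec Z _).symm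
      have e1 : Z *ᵥ x = A *ᵥ (B *ᵥ x) := by
        rw [hx, mulVec_mulVec, hZB, ← mulVec_mulVec, ← mulVec_mulVec]
      set w := B *ᵥ x with hw
      have e3 : μ0A * (w ⬝ᵥ w) ≤ (A *ᵥ w) ⬝ᵥ (A *ᵥ w) := by
        rw [dot_self_mulVecH A w]
        exact rayleigh_min hAA hr w
      have e4 : μBB * (x ⬝ᵥ x) ≤ w ⬝ᵥ w := by
        have h5 : B.rank ≤ b - (b - r) := by
          have := Matrix.rank_le_card_height B
          simp only [Fintype.card_fin] at this
          omega
        have h6 := rayleigh_on_range B hbr h5 y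
        rw [hw, hx, dot_self_mulVecH B (Bᵀ *ᵥ y)]
        exact h6
      rw [e2, e1]
      calc μ0A * μBB * (x ⬝ᵥ x) = μ0A * (μBB * (x ⬝ᵥ x)) := by ring
        _ ≤ μ0A * (w ⬝ᵥ w) := by
            exact mul_le_mul_of_nonneg_left e4 hμ0A
        _ ≤ (A *ᵥ w) ⬝ᵥ (A *ᵥ w) := e3


lemma nu_sq_le {a b r : ℕ} (hr : 0 < r) (hrb : r ≤ b)
    (Z : Matrix (Fin a) (Fin b) ℝ) (A : Matrix (Fin a) (Fin r) ℝ) (B : Matrix (Fin r) (Fin b) ℝ)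
    (hZB : Z * Bᵀ = A * B * Bᵀ) (heq' : Aᴴ * A = B * Bᵀ) (j : Fin r) :
    (sorted (isHermitian_transpose_mul_self A) j) ^ 2
      ≤ sorted (isHermitian_transpose_mul_self Z) ⟨b - r + j.val, by omega⟩ := by
  have hj := j.2
  set hAA := isHermitian_transpose_mul_self A with hhAA
  set hZZ := isHermitian_transpose_mul_self Z with hhZZ
  set ν := sorted hAA j with hν'
  have hν0 : 0 ≤ ν := sorted_tm_nonneg A _
  by_cases hνpos : ν ≤ 0
  · have h0 : ν = 0 := le_antisymm hνpos hν0
    rw [h0]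
    simpa using sorted_tm_nonneg Z _
  · push_neg at hνpos
    set gA := Tuple.sort hAA.eigenvalues with hgA
    set vs : Fin (r - j.val) → (Fin r → ℝ) :=
      fun k => evec hAA (gA ⟨j.val + k.val, by omega⟩) with hvs
    set lam : Fin (r - j.val) → ℝ := fun k => hAA.eigenvalues (gA ⟨j.val + k.val, by omega⟩)
      with hlam
    have hortho : ∀ k l, vs k ⬝ᵥ vs l = if k = l then 1 else 0 := by
      intro k l
      rw [hvs]
      simp only
      rw [evec_ortho hAA]
      congr 1
      simp only [eq_iff_iff]
      constructor
      · intro h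
        have := gA.injective h
        exact Fin.ext (by simpa [Fin.ext_iff] using this)
      · rintro rfl; rfl
    have hlam_ge : ∀ k, ν ≤ lam k := by
      intro k
      rw [hν', hlam]
      exact sorted_mono hAA (by simp [Fin.le_def])
    have hlam_pos : ∀ k, 0 < lam k := fun k => lt_of_lt_of_le hνpos (hlam_ge k)
    -- common computations for y = combo vs c
    have hSy : ∀ c : Fin (r - j.val) → ℝ,
        (Aᴴ * A) *ᵥ (combo vs c) = ∑ k, (lam k * c k) • vs k := by
      intro c
      rw [combo_apply]
      exact mulVec_combo vs lam (fun k => evec_eigen hAA _) c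
    have hySy : ∀ c : Fin (r - j.val) → ℝ,
        (combo vs c) ⬝ᵥ ((Aᴴ * A) *ᵥ (combo vs c)) = ∑ k, c k * (lam k * c k) := by
      intro c
      rw [hSy, combo_apply]
      exact dot_combo vs hortho _ _
    have hxx : ∀ c : Fin (r - j.val) → ℝ,
        (Bᵀ *ᵥ (combo vs c)) ⬝ᵥ (Bᵀ *ᵥ (combo vs c))
          = ∑ k, c k * (lam k * c k) := by
      intro c
      rw [dot_self_mulVec Bᵀ, transpose_transpose, ← heq']
      exact hySy c
    set φ : (Fin (r - j.val) → ℝ) →ₗ[ℝ] (Fin b → ℝ) := Bᵀ.mulVecLin ∘ₗ combo vs with hφ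
    have hinj : Function.Injective φ := by
      rw [injective_iff_map_eq_zero]
      intro c hc
      have h0 : (Bᵀ *ᵥ (combo vs c)) = 0 := by
        rw [hφ] at hc
        simpa only [LinearMap.coe_comp, Function.comp_apply, mulVecLin_apply] using hc
      have h1 : (0:ℝ) = ∑ k, c k * (lam k * c k) := by
        rw [← hxx c, h0]
        simp
      funext k
      have h2 := (Finset.sum_eq_zero_iff_of_nonneg (fun k _ => by
        have := (hlam_pos k).le
        nlinarith [mul_self_nonneg (c k)] )).1 h1.symm k (by simp)
      have h3 : lam k * (c k * c k) = 0 := by linear_combination h2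
      have h4 : c k * c k = 0 := by
        rcases mul_eq_zero.1 h3 with h | h
        · exact absurd h (ne_of_gt (hlam_pos k))
        · exact h
      exact mul_self_eq_zero.1 h4
    apply cf_lower hZZ (by omega) _ (LinearMap.range φ)
    · rw [LinearMap.finrank_range_of_inj hinj]
      simp only [Module.finrank_pi, Fintype.card_fin]
      omega
    · rintro x ⟨c, rfl⟩
      have hφc : φ c = Bᵀ *ᵥ (combo vs c) := by
        rw [hφ]
        simp only [LinearMap.coe_comp, Function.comp_apply, mulVecLin_apply]
      rw [hφc]
      set y := combo vs c with hy
      have e2 : (Bᵀ *ᵥ y) ⬝ᵥ ((Zᵀ * Z) *ᵥ (Bᵀ *ᵥ y))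
          = (Z *ᵥ (Bᵀ *ᵥ y)) ⬝ᵥ (Z *ᵥ (Bᵀ *ᵥ y)) := (dot_self_mulVec Z _).symm
      have e1 : Z *ᵥ (Bᵀ *ᵥ y) = A *ᵥ ((Aᴴ * A) *ᵥ y) := by
        rw [mulVec_mulVec, hZB, Matrix.mul_assoc, ← heq', ← mulVec_mulVec]
      have e3 : (A *ᵥ ((Aᴴ * A) *ᵥ y)) ⬝ᵥ (A *ᵥ ((Aᴴ * A) *ᵥ y))
          = ∑ k, (lam k * c k) * (lam k * (lam k * c k)) := by
        rw [dot_self_mulVecH A]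
        rw [hy, hSy c]
        have := mulVec_combo vs lam (fun k => evec_eigen hAA _) (fun k => lam k * c k)
        rw [conjTranspose_eq_transpose_of_trivial, this]
        exact dot_combo vs hortho _ _
      rw [e2, e1, e3, hy, hxx c, Finset.mul_sum]
      refine Finset.sum_le_sum fun k _ => ?_
      have h1 := hlam_ge k
      have h2 := (hlam_pos k).le
      have hc2 : 0 ≤ lam k * (c k * c k) := mul_nonneg h2 (mul_self_nonneg _)
      have hν2 : ν ^ 2 ≤ lam k ^ 2 := by nlinarith
      nlinarith [mul_le_mul_of_nonneg_right hν2 hc2]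


lemma nu0_le_muBB {a b r : ℕ} (hr : 0 < r) (hrb : r ≤ b)
    (A : Matrix (Fin a) (Fin r) ℝ) (B : Matrix (Fin r) (Fin b) ℝ)
    (heq' : Aᴴ * A = B * Bᵀ) :
    sorted (isHermitian_transpose_mul_self A) ⟨0, hr⟩
      ≤ sorted (isHermitian_transpose_mul_self B) ⟨b - r, by omega⟩ := by
  have hbr : b - r < b := by omega
  set hAA := isHermitian_transpose_mul_self A with hhAA
  set hBB := isHermitian_transpose_mul_self B with hhBB
  set ν0 := sorted hAA ⟨0, hr⟩ with hν0'
  by_cases hcase : ν0 ≤ 0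
  · exact hcase.trans (sorted_tm_nonneg B _)
  · push_neg at hcase
    have heigpos : ∀ i, 0 < hAA.eigenvalues i := fun i =>
      lt_of_lt_of_le hcase (sorted_zero_le_eig hAA hr i)
    -- Aᴴ * A is invertible, so rank (B * Bᵀ) = r
    have hdet : (Aᴴ * A).det ≠ 0 := by
      rw [conjTranspose_eq_transpose_of_trivial, hAA.det_eq_prod_eigenvalues]
      have : (0:ℝ) < ∏ i, hAA.eigenvalues i := Finset.prod_pos fun i _ => heigpos i
      simpa using this.ne'
    have hrankS : (Aᴴ * A).rank = r := by
      rw [Matrix.rank_of_isUnit _ (Matrix.isUnit_iff_isUnit_det _ |>.2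
        (isUnit_iff_ne_zero.2 hdet))]
      simp
    have hrkB : r ≤ B.rank := by
      have := Matrix.rank_mul_le_left B Bᵀ
      rw [← heq', hrankS] at this
      exact this
    apply cf_lower hBB hbr _ (LinearMap.range (Bᵀ.mulVecLin))
    · have h3 : Module.finrank ℝ (LinearMap.range (Bᵀ.mulVecLin)) = Bᵀ.rank := rfl
      rw [h3, Matrix.rank_transpose]
      omega
    · rintro x ⟨y, rfl⟩
      simp only [mulVecLin_apply]
      have e2 : (Bᵀ *ᵥ y) ⬝ᵥ ((Bᵀ * B) *ᵥ (Bᵀ *ᵥ y))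
          = (B *ᵥ (Bᵀ *ᵥ y)) ⬝ᵥ (B *ᵥ (Bᵀ *ᵥ y)) := (dot_self_mulVec B _).symm
      have e1 : B *ᵥ (Bᵀ *ᵥ y) = (Aᴴ * A) *ᵥ y := by
        rw [mulVec_mulVec, ← heq']
      have e0 : (Bᵀ *ᵥ y) ⬝ᵥ (Bᵀ *ᵥ y) = y ⬝ᵥ ((Aᴴ * A) *ᵥ y) := by
        rw [dot_self_mulVec Bᵀ, transpose_transpose, ← heq']
      rw [e2, e1, e0]
      -- expand y in the eigenbasis of AᴴA
      set c : Fin r → ℝ := fun k => evec hAA k ⬝ᵥ y with hc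
      have hyr := evec_repr hAA y
      have hSy : (Aᴴ * A) *ᵥ y = ∑ k, (hAA.eigenvalues k * c k) • evec hAA k := by
        conv_lhs => rw [hyr]
        exact mulVec_combo _ _ (evec_eigen hAA) c
      have h1 : y ⬝ᵥ ((Aᴴ * A) *ᵥ y) = ∑ k, c k * (hAA.eigenvalues k * c k) := by
        rw [hSy]; conv_lhs => rw [hyr]
        exact dot_combo _ (evec_ortho hAA) _ _
      have h2 : ((Aᴴ * A) *ᵥ y) ⬝ᵥ ((Aᴴ * A) *ᵥ y)
          = ∑ k, (hAA.eigenvalues k * c k) * (hAA.eigenvalues k * c k) := by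
        rw [hSy]
        exact dot_combo _ (evec_ortho hAA) _ _
      rw [h1, h2, Finset.mul_sum]
      refine Finset.sum_le_sum fun k _ => ?_
      have hk1 := (heigpos k).le
      have hk2 : ν0 ≤ hAA.eigenvalues k := sorted_zero_le_eig hAA hr k
      nlinarith [mul_self_nonneg (c k)]


lemma frobAB_eq {a b r : ℕ} (A : Matrix (Fin a) (Fin r) ℝ) (B : Matrix (Fin r) (Fin b) ℝ)
    (heq' : Aᴴ * A = B * Bᵀ) :
    ∑ i, ∑ j, ((A * B) i j) ^ 2
      = ∑ k : Fin r, (sorted (isHermitian_transpose_mul_self A) k) ^ 2 := by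
  rw [frob_eq_trace]
  have hct : Aᴴ = Aᵀ := conjTranspose_eq_transpose_of_trivial A
  have h1 : (A * B)ᵀ * (A * B) = Bᵀ * ((Aᵀ * A) * B) := by
    rw [transpose_mul]
    simp only [Matrix.mul_assoc]
  rw [h1, Matrix.trace_mul_comm, Matrix.mul_assoc,
    ← (show Aᵀ * A = B * Bᵀ by rw [← hct]; exact heq'),
    trace_sq_eq_sum_eig_sq (isHermitian_transpose_mul_self A)]
  exact (Equiv.sum_comp (Tuple.sort (isHermitian_transpose_mul_self A).eigenvalues)
    (fun k => ((isHermitian_transpose_mul_self A).eigenvalues k) ^ 2)).symm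

lemma sum_top_le {a b r : ℕ} (hr : 0 < r) (hrb : r ≤ b)
    (Z : Matrix (Fin a) (Fin b) ℝ) (A : Matrix (Fin a) (Fin r) ℝ) (B : Matrix (Fin r) (Fin b) ℝ)
    (hbest : ∀ C : Matrix (Fin a) (Fin b) ℝ, C.rank ≤ r →
      ∑ i, ∑ j, (Z i j - (A * B) i j) ^ 2 ≤ ∑ i, ∑ j, (Z i j - C i j) ^ 2) :
    ∑ k : Fin r, sorted (isHermitian_transpose_mul_self Z) ⟨b - r + k.val, by omega⟩
      ≤ ∑ i, ∑ j, ((A * B) i j) ^ 2 := by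
  set hZZ := isHermitian_transpose_mul_self Z with hhZZ
  have hct : Zᴴ = Zᵀ := conjTranspose_eq_transpose_of_trivial Z
  set X := Z - A * B with hX
  have hst : X * Bᵀ = 0 := stationarity hbest
  -- orthogonality of the residual to A*B
  have hip : ∑ i, ∑ j, X i j * (A * B) i j = 0 := by
    rw [ip_shift X A B, hst]
    simp
  -- Frobenius pythagoras
  have hZdec : ∑ i, ∑ j, (Z i j) ^ 2
      = (∑ i, ∑ j, (X i j) ^ 2) + ∑ i, ∑ j, ((A * B) i j) ^ 2 := by
    have h := frob_sub_expand X (A * B) (-1)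
    have h2 : ∀ i j, X i j - (-1) * (A * B) i j = Z i j := by
      intro i j; simp [hX]
    simp only [h2] at h
    rw [h, hip]
    ring
  -- the projector onto the top r eigenvectors of ZᴴZ
  set g := Tuple.sort hZZ.eigenvalues with hg
  set Wm : Matrix (Fin b) (Fin r) ℝ :=
    Matrix.of (fun i k => evec hZZ (g ⟨b - r + k.val, by omega⟩) i) with hWm
  have hWW : Wmᵀ * Wm = 1 := by
    ext k l
    rw [mul_apply, one_apply]
    have h3 : ∑ i, Wmᵀ k i * Wm i l
        = evec hZZ (g ⟨b - r + k.val, by omega⟩) ⬝ᵥ evec hZZ (g ⟨b - r + l.val, by omega⟩) :=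
      rfl
    rw [h3, evec_ortho hZZ]
    congr 1
    simp only [eq_iff_iff]
    constructor
    · intro h
      have := g.injective h
      exact Fin.ext (by simpa [Fin.ext_iff] using this)
    · rintro rfl; rfl
  set P := Wm * Wmᵀ with hP
  have hPsymm : Pᵀ = P := by
    rw [hP, transpose_mul, transpose_transpose]
  have hPP : P * P = P := by
    rw [hP, Matrix.mul_assoc, ← Matrix.mul_assoc Wmᵀ Wm Wmᵀ, hWW, Matrix.one_mul]
  set C := Z * P with hC
  have hrank : C.rank ≤ r := by
    rw [hC, hP, ← Matrix.mul_assoc]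
    exact (Matrix.rank_mul_le_left _ _).trans
      ((Matrix.rank_mul_le_right _ _).trans ((Matrix.rank_le_card_width _).trans (by simp)))
  -- trace identities
  have hipC : ∑ i, ∑ j, Z i j * C i j = ((Zᵀ * Z) * P).trace := by
    rw [ip_eq_trace, hC, ← Matrix.mul_assoc]
  have hfrobC : ∑ i, ∑ j, (C i j) ^ 2 = ((Zᵀ * Z) * P).trace := by
    rw [frob_eq_trace]
    have h4 : Cᵀ * C = (P * (Zᵀ * Z)) * P := by
      rw [hC, transpose_mul, hPsymm]
      simp only [Matrix.mul_assoc]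
    rw [h4, Matrix.trace_mul_comm, ← Matrix.mul_assoc, hPP, Matrix.trace_mul_comm]
  have htau : ((Zᵀ * Z) * P).trace
      = ∑ k : Fin r, sorted hZZ ⟨b - r + k.val, by omega⟩ := by
    have h5 : (Zᵀ * Z) * P = ((Zᵀ * Z) * Wm) * Wmᵀ := by
      rw [hP]
      simp only [Matrix.mul_assoc]
    rw [h5, Matrix.trace_mul_comm, Matrix.trace]
    refine Finset.sum_congr rfl fun k _ => ?_
    have h6 : (Wmᵀ * ((Zᵀ * Z) * Wm)).diag k
        = evec hZZ (g ⟨b - r + k.val, by omega⟩) ⬝ᵥ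
            ((Zᵀ * Z) *ᵥ evec hZZ (g ⟨b - r + k.val, by omega⟩)) := by
      simp only [diag_apply, mul_apply, transpose_apply, dotProduct, mulVec, hWm, of_apply]
    rw [h6, evec_eigen hZZ, dotProduct_smul, evec_ortho hZZ, if_pos rfl]
    simp [sorted, hg]
  -- apply optimality
  have hb2 := hbest C hrank
  have hL : ∑ i, ∑ j, (Z i j - (A * B) i j) ^ 2 = ∑ i, ∑ j, (X i j) ^ 2 := by
    simp [hX]
  have hR : ∑ i, ∑ j, (Z i j - C i j) ^ 2
      = (∑ i, ∑ j, (Z i j) ^ 2) - ((Zᵀ * Z) * P).trace := by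
    have h := frob_sub_expand Z C 1
    have h2 : ∀ i j, Z i j - 1 * C i j = Z i j - C i j := by intro i j; ring
    simp only [h2] at h
    rw [h, hipC, hfrobC]
    ring
  rw [hL, hR] at hb2
  rw [← htau]
  linarith


end helperlemmas

/-- If `AB` is a best rank-`r` approximation of `Z`, then `σ_r(A)·σ_r(B) ≤ σ_r(Z)`,
with equality when `AᵀA = BBᵀ`. -/
theorem stmt12 {a b r : ℕ} (hr : 0 < r) (hra : r ≤ a) (hrb : r ≤ b)
    (Z : Matrix (Fin a) (Fin b) ℝ)
    (A : Matrix (Fin a) (Fin r) ℝ) (B : Matrix (Fin r) (Fin b) ℝ)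
    (hbest : ∀ C : Matrix (Fin a) (Fin b) ℝ, C.rank ≤ r →
      ∑ i, ∑ j, (Z i j - (A * B) i j) ^ 2 ≤ ∑ i, ∑ j, (Z i j - C i j) ^ 2) :
    sv A ⟨r - 1, Nat.sub_lt hr one_pos⟩ *
        sv B ⟨r - 1, lt_of_lt_of_le (Nat.sub_lt hr one_pos) hrb⟩
      ≤ sv Z ⟨r - 1, lt_of_lt_of_le (Nat.sub_lt hr one_pos) hrb⟩ ∧
    (Aᵀ * A = B * Bᵀ →
      sv A ⟨r - 1, Nat.sub_lt hr one_pos⟩ *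
          sv B ⟨r - 1, lt_of_lt_of_le (Nat.sub_lt hr one_pos) hrb⟩
        = sv Z ⟨r - 1, lt_of_lt_of_le (Nat.sub_lt hr one_pos) hrb⟩) := by
  have hb : 0 < b := lt_of_lt_of_le hr hrb
  have hbr : b - r < b := by omega
  set hAA := isHermitian_transpose_mul_self A with hhAA
  set hBB := isHermitian_transpose_mul_self B with hhBB
  set hZZ := isHermitian_transpose_mul_self Z with hhZZ
  have hrevA : ((⟨r - 1, Nat.sub_lt hr one_pos⟩ : Fin r)).rev = ⟨0, hr⟩ := by
    apply Fin.ext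
    rw [Fin.val_rev]
    simp
    omega
  have hrevB : ((⟨r - 1, lt_of_lt_of_le (Nat.sub_lt hr one_pos) hrb⟩ : Fin b)).rev
      = ⟨b - r, hbr⟩ := by
    apply Fin.ext
    rw [Fin.val_rev]
    simp
    omega
  have hsvA : sv A ⟨r - 1, Nat.sub_lt hr one_pos⟩ = Real.sqrt (sorted hAA ⟨0, hr⟩) := by
    rw [show sv A ⟨r - 1, Nat.sub_lt hr one_pos⟩
      = Real.sqrt (sorted hAA (⟨r - 1, Nat.sub_lt hr one_pos⟩ : Fin r).rev) from rfl, hrevA]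
  have hsvB : sv B ⟨r - 1, lt_of_lt_of_le (Nat.sub_lt hr one_pos) hrb⟩
      = Real.sqrt (sorted hBB ⟨b - r, hbr⟩) := by
    rw [show sv B ⟨r - 1, lt_of_lt_of_le (Nat.sub_lt hr one_pos) hrb⟩
      = Real.sqrt (sorted hBB
          (⟨r - 1, lt_of_lt_of_le (Nat.sub_lt hr one_pos) hrb⟩ : Fin b).rev) from rfl, hrevB]
  have hsvZ : sv Z ⟨r - 1, lt_of_lt_of_le (Nat.sub_lt hr one_pos) hrb⟩
      = Real.sqrt (sorted hZZ ⟨b - r, hbr⟩) := by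
    rw [show sv Z ⟨r - 1, lt_of_lt_of_le (Nat.sub_lt hr one_pos) hrb⟩
      = Real.sqrt (sorted hZZ
          (⟨r - 1, lt_of_lt_of_le (Nat.sub_lt hr one_pos) hrb⟩ : Fin b).rev) from rfl, hrevB]
  have hst := stationarity hbest
  have hZB : Z * Bᵀ = A * B * Bᵀ := by
    rwa [Matrix.sub_mul, sub_eq_zero] at hst
  have h1 := part1 hr hrb Z A B hZB
  have hineq : sv A ⟨r - 1, Nat.sub_lt hr one_pos⟩ *
      sv B ⟨r - 1, lt_of_lt_of_le (Nat.sub_lt hr one_pos) hrb⟩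
      ≤ sv Z ⟨r - 1, lt_of_lt_of_le (Nat.sub_lt hr one_pos) hrb⟩ := by
    rw [hsvA, hsvB, hsvZ, ← Real.sqrt_mul (sorted_tm_nonneg A _)]
    exact Real.sqrt_le_sqrt h1
  refine ⟨hineq, fun heq => ?_⟩
  have heq' : Aᴴ * A = B * Bᵀ := by
    rw [conjTranspose_eq_transpose_of_trivial]
    exact heq
  set ν0 := sorted hAA ⟨0, hr⟩ with hν0'
  have hν0 : 0 ≤ ν0 := sorted_tm_nonneg A _
  have hsum := (sum_top_le hr hrb Z A B hbest).trans (le_of_eq (frobAB_eq A B heq'))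
  have hpt : ∀ k : Fin r, (sorted hAA k) ^ 2 ≤ sorted hZZ ⟨b - r + k.val, by omega⟩ :=
    fun k => nu_sq_le hr hrb Z A B hZB heq' k
  have hk0 : sorted hZZ ⟨b - r, hbr⟩ ≤ ν0 ^ 2 := by
    set k0 : Fin r := ⟨0, hr⟩ with hk0'
    have e1 := Finset.sum_erase_add Finset.univ
      (fun k : Fin r => sorted hZZ ⟨b - r + k.val, by omega⟩) (Finset.mem_univ k0)
    have e2 := Finset.sum_erase_add Finset.univ
      (fun k : Fin r => (sorted hAA k) ^ 2) (Finset.mem_univ k0)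
    have hA0 : ∑ k ∈ Finset.univ.erase k0, (sorted hAA k) ^ 2
        ≤ ∑ k ∈ Finset.univ.erase k0, sorted hZZ ⟨b - r + k.val, by omega⟩ :=
      Finset.sum_le_sum (fun k _ => hpt k)
    have e3 : (⟨b - r + (k0 : ℕ), by omega⟩ : Fin b) = ⟨b - r, hbr⟩ := Fin.ext (by simp [hk0'])
    have e4 : sorted hZZ ⟨b - r + (k0 : ℕ), by omega⟩ = sorted hZZ ⟨b - r, hbr⟩ := by rw [e3]
    have e5 : (sorted hAA k0) ^ 2 = ν0 ^ 2 := rfl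
    beta_reduce at e1 e2
    linarith [hsum, e1, e2, hA0, e4, e5]
  have hBBge : ν0 ≤ sorted hBB ⟨b - r, hbr⟩ := nu0_le_muBB hr hrb A B heq'
  apply le_antisymm hineq
  rw [hsvA, hsvB, hsvZ]
  calc Real.sqrt (sorted hZZ ⟨b - r, hbr⟩) ≤ Real.sqrt (ν0 ^ 2) := Real.sqrt_le_sqrt hk0
    _ = ν0 := by rw [Real.sqrt_sq hν0]
    _ = Real.sqrt ν0 * Real.sqrt ν0 := (Real.mul_self_sqrt hν0).symm
    _ ≤ Real.sqrt ν0 * Real.sqrt (sorted hBB ⟨b - r, hbr⟩) :=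
        mul_le_mul_of_nonneg_left (Real.sqrt_le_sqrt hBBge) (Real.sqrt_nonneg _)
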